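/- For every n ≥ 1 there exist constants C > 0 and δ₀ ∈ (0,1) such that: for every δ ∈ (0, δ₀] and every complex n×n matrix Q with QᵀQ = I, det Q = 1, and ‖Im Q‖ < δ·‖Re Q‖ (operator norms, entrywise real/imaginary parts), there exists U ∈ SO(n,ℝ) with ‖Q − U‖ ≤ C·δ. -/

import Mathlib

open scoped Matrix.Norms.L2Operator Matrix

/-- The entrywise real part of a complex matrix. -/
def matRe {n : ℕ} (B : Matrix (Fin n) (Fin n) ℂ) : Matrix (Fin n) (Fin n) ℝ :=
  B.map Complex.re

/-- The entrywise imaginary part of a complex matrix. -/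
def matIm {n : ℕ} (B : Matrix (Fin n) (Fin n) ℂ) : Matrix (Fin n) (Fin n) ℝ :=
  B.map Complex.im

section Aux

variable {n : ℕ}

private lemma aux_opNorm_le_bound {𝕜 : Type*} [RCLike 𝕜] (A : Matrix (Fin n) (Fin n) 𝕜) {c : ℝ}
    (hc : 0 ≤ c)
    (h : ∀ x : EuclideanSpace 𝕜 (Fin n), ‖(EuclideanSpace.equiv (Fin n) 𝕜).symm (A *ᵥ x)‖ ≤ c * ‖x‖) :
    ‖A‖ ≤ c := by
  rw [Matrix.cstar_norm_def]
  refine ContinuousLinearMap.opNorm_le_bound _ hc fun x => ?_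
  have hx : Matrix.toEuclideanCLM (n := Fin n) (𝕜 := 𝕜) A x
      = (EuclideanSpace.equiv (Fin n) 𝕜).symm (A *ᵥ x) := by
    apply (WithLp.equiv 2 _).injective
    rfl
  rw [hx]; exact h x

private lemma aux_norm_diagonal_le {v : Fin n → ℝ} {c : ℝ} (hc : 0 ≤ c) (h : ∀ i, |v i| ≤ c) :
    ‖(Matrix.diagonal v : Matrix (Fin n) (Fin n) ℝ)‖ ≤ c := by
  refine aux_opNorm_le_bound _ hc fun x => ?_
  have h1 : ‖(EuclideanSpace.equiv (Fin n) ℝ).symm (Matrix.diagonal v *ᵥ x)‖ ^ 2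
      ≤ (c * ‖x‖) ^ 2 := by
    rw [EuclideanSpace.norm_eq, Real.sq_sqrt (by positivity), mul_pow, EuclideanSpace.norm_eq,
      Real.sq_sqrt (by positivity), Finset.mul_sum]
    refine Finset.sum_le_sum fun i _ => ?_
    have e : ((EuclideanSpace.equiv (Fin n) ℝ).symm (Matrix.diagonal v *ᵥ x)) i = v i * x i :=
      Matrix.mulVec_diagonal v x i
    rw [e]
    simp only [Real.norm_eq_abs, abs_mul]
    rw [mul_pow]
    exact mul_le_mul_of_nonneg_right (pow_le_pow_left₀ (abs_nonneg _) (h i) 2)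
      (by positivity)
  have h2 : (0:ℝ) ≤ c * ‖x‖ := by positivity
  nlinarith [norm_nonneg ((EuclideanSpace.equiv (Fin n) ℝ).symm (Matrix.diagonal v *ᵥ x))]

private lemma aux_norm_map_ofReal_le (A : Matrix (Fin n) (Fin n) ℝ) :
    ‖A.map (Complex.ofReal)‖ ≤ ‖A‖ := by
  refine aux_opNorm_le_bound _ (norm_nonneg A) fun x => ?_
  have hx : (0:ℝ) ≤ ‖A‖ * ‖x‖ := by positivity
  rw [← Real.sqrt_sq (norm_nonneg _), ← Real.sqrt_sq hx]
  apply Real.sqrt_le_sqrt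
  set xr : EuclideanSpace ℝ (Fin n) := WithLp.toLp 2 (fun i => (x i).re) with hxr
  set xi : EuclideanSpace ℝ (Fin n) := WithLp.toLp 2 (fun i => (x i).im) with hxi
  have key : ∀ i, ‖(A.map Complex.ofReal *ᵥ x) i‖^2 = ((A *ᵥ xr) i)^2 + ((A *ᵥ xi) i)^2 := by
    intro i
    have hre : ((A.map Complex.ofReal *ᵥ x) i).re = (A *ᵥ xr) i := by
      simp [Matrix.mulVec, dotProduct, hxr, Complex.mul_re]
    have him : ((A.map Complex.ofReal *ᵥ x) i).im = (A *ᵥ xi) i := by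
      simp [Matrix.mulVec, dotProduct, hxi, Complex.mul_im]
    rw [← hre, ← him, Complex.sq_norm, Complex.normSq_apply]; ring
  have e1 : ‖(EuclideanSpace.equiv (Fin n) ℂ).symm (A.map Complex.ofReal *ᵥ x)‖^2
      = ∑ i, (((A *ᵥ xr) i)^2 + ((A *ᵥ xi) i)^2) := by
    rw [EuclideanSpace.norm_eq, Real.sq_sqrt (by positivity)]
    exact Finset.sum_congr rfl fun i _ => key i
  have e2 : ‖x‖^2 = ‖xr‖^2 + ‖xi‖^2 := by
    rw [EuclideanSpace.norm_eq, Real.sq_sqrt (by positivity),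
      EuclideanSpace.norm_eq, Real.sq_sqrt (by positivity),
      EuclideanSpace.norm_eq, Real.sq_sqrt (by positivity), ← Finset.sum_add_distrib]
    refine Finset.sum_congr rfl fun i _ => ?_
    rw [Complex.sq_norm, Complex.normSq_apply]
    simp only [hxr, hxi, Real.norm_eq_abs, sq_abs]
    ring
  have er : ‖(EuclideanSpace.equiv (Fin n) ℝ).symm (A *ᵥ xr)‖^2 = ∑ i, ((A *ᵥ xr) i)^2 := by
    rw [EuclideanSpace.norm_eq, Real.sq_sqrt (by positivity)]
    exact Finset.sum_congr rfl fun i _ => by rw [Real.norm_eq_abs, sq_abs]; rfl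
  have ei : ‖(EuclideanSpace.equiv (Fin n) ℝ).symm (A *ᵥ xi)‖^2 = ∑ i, ((A *ᵥ xi) i)^2 := by
    rw [EuclideanSpace.norm_eq, Real.sq_sqrt (by positivity)]
    exact Finset.sum_congr rfl fun i _ => by rw [Real.norm_eq_abs, sq_abs]; rfl
  have b1 := Matrix.l2_opNorm_mulVec A xr
  have b2 := Matrix.l2_opNorm_mulVec A xi
  rw [e1, Finset.sum_add_distrib, ← er, ← ei]
  have hb1 : ‖(EuclideanSpace.equiv (Fin n) ℝ).symm (A *ᵥ xr)‖^2 ≤ (‖A‖ * ‖xr‖)^2 :=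
    pow_le_pow_left₀ (norm_nonneg _) b1 2
  have hb2 : ‖(EuclideanSpace.equiv (Fin n) ℝ).symm (A *ᵥ xi)‖^2 ≤ (‖A‖ * ‖xi‖)^2 :=
    pow_le_pow_left₀ (norm_nonneg _) b2 2
  have h3 : ‖A‖^2 * ‖x‖^2 = ‖A‖^2*‖xr‖^2 + ‖A‖^2*‖xi‖^2 := by rw [e2]; ring
  nlinarith [hb1, hb2, h3]

/-- A matrix with orthonormal columns has norm 1. -/
private lemma aux_norm_orth {𝕜 : Type*} [RCLike 𝕜] (hn : 1 ≤ n) {V : Matrix (Fin n) (Fin n) 𝕜}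
    (h : Vᴴ * V = 1) : ‖V‖ = 1 := by
  haveI : Nonempty (Fin n) := ⟨⟨0, hn⟩⟩
  have h1 : ‖V‖ * ‖V‖ = 1 := by
    rw [← Matrix.l2_opNorm_conjTranspose_mul_self, h, CStarRing.norm_one]
  nlinarith [norm_nonneg V]

private lemma matRe_mul (A B : Matrix (Fin n) (Fin n) ℂ) :
    matRe (A * B) = matRe A * matRe B - matIm A * matIm B := by
  ext i j
  simp [matRe, matIm, Matrix.mul_apply, Matrix.sub_apply, Complex.mul_re,
    Finset.sum_sub_distrib]

private lemma matRe_transpose (A : Matrix (Fin n) (Fin n) ℂ) : matRe Aᵀ = (matRe A)ᵀ := rfl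
private lemma matIm_transpose (A : Matrix (Fin n) (Fin n) ℂ) : matIm Aᵀ = (matIm A)ᵀ := rfl

private lemma matRe_one : matRe (1 : Matrix (Fin n) (Fin n) ℂ) = 1 := by
  ext i j
  by_cases h : i = j <;> simp [matRe, Matrix.one_apply, h]

private lemma matQ_eq (Q : Matrix (Fin n) (Fin n) ℂ) :
    Q = (matRe Q).map Complex.ofReal + Complex.I • (matIm Q).map Complex.ofReal := by
  ext i j
  simp [matRe, matIm, Matrix.add_apply, Matrix.smul_apply]
  rw [mul_comm]
  exact (Complex.re_add_im _).symm

end Aux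

set_option maxHeartbeats 2000000 in
/-- For every `n ≥ 1` there are `C > 0` and `δ₀ ∈ (0,1)` such that for every
`δ ∈ (0, δ₀]` and every `Q ∈ SO(n,ℂ)` with `‖Im Q‖ < δ·‖Re Q‖` (operator norms), there exists
`U ∈ SO(n,ℝ)` with `‖Q − U‖ ≤ C·δ`. -/
theorem stmt_15 (n : ℕ) (hn : 1 ≤ n) :
    ∃ C : ℝ, 0 < C ∧ ∃ δ₀ : ℝ, 0 < δ₀ ∧ δ₀ < 1 ∧
      ∀ δ : ℝ, 0 < δ → δ ≤ δ₀ →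
        ∀ Q : Matrix (Fin n) (Fin n) ℂ, Qᵀ * Q = 1 → Q.det = 1 →
          ‖matIm Q‖ < δ * ‖matRe Q‖ →
          ∃ U : Matrix (Fin n) (Fin n) ℝ, Uᵀ * U = 1 ∧ U.det = 1 ∧
            ‖Q - U.map Complex.ofReal‖ ≤ C * δ := by
  refine ⟨4, by norm_num, 1/4, by norm_num, by norm_num, ?_⟩
  intro δ hδ hδ0 Q hQ hdet hlt
  haveI : Nonempty (Fin n) := ⟨⟨0, hn⟩⟩
  set X := matRe Q with hX
  set Y := matIm Q with hY
  -- the key identity XᵀX = 1 + YᵀY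
  have hG : Xᵀ * X = 1 + Yᵀ * Y := by
    have h1 : matRe (Qᵀ * Q) = 1 := by rw [hQ, matRe_one]
    rw [matRe_mul, matRe_transpose, matIm_transpose] at h1
    rw [← h1, ← hX, ← hY]; abel
  -- norm facts
  have hnX : ‖X‖ * ‖X‖ = ‖Xᵀ * X‖ := by
    rw [← Matrix.conjTranspose_eq_transpose_of_trivial,
      Matrix.l2_opNorm_conjTranspose_mul_self]
  have hnY : ‖Yᵀ * Y‖ = ‖Y‖ * ‖Y‖ := by
    rw [← Matrix.conjTranspose_eq_transpose_of_trivial,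
      Matrix.l2_opNorm_conjTranspose_mul_self]
  have hone : ‖(1 : Matrix (Fin n) (Fin n) ℝ)‖ = 1 := CStarRing.norm_one
  have hXsq : ‖X‖ * ‖X‖ ≤ 1 + (δ * ‖X‖) * (δ * ‖X‖) := by
    rw [hnX, hG]
    calc ‖(1 : Matrix (Fin n) (Fin n) ℝ) + Yᵀ * Y‖ ≤ ‖(1 : Matrix (Fin n) (Fin n) ℝ)‖ + ‖Yᵀ * Y‖ :=
          norm_add_le _ _
      _ ≤ 1 + (δ * ‖X‖) * (δ * ‖X‖) := by
          rw [hone, hnY]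
          have := hlt.le
          nlinarith [norm_nonneg Y, norm_nonneg X, mul_pos hδ hδ]
  have hXle : ‖X‖ ≤ 2 := by
    have h2 : δ*‖X‖ ≤ (1/4)*‖X‖ := mul_le_mul_of_nonneg_right hδ0 (norm_nonneg X)
    have h3 : (δ*‖X‖)*(δ*‖X‖) ≤ ((1/4)*‖X‖)*((1/4)*‖X‖) :=
      mul_le_mul h2 h2 (by positivity) (by positivity)
    nlinarith [norm_nonneg X]
  have hYle : ‖Y‖ ≤ 2 * δ := by nlinarith [hlt, norm_nonneg X]
  have hYsq : ‖Y‖ * ‖Y‖ ≤ 4 * δ * δ := by nlinarith [norm_nonneg Y]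
  -- spectral decomposition of G = XᵀX = 1 + YᵀY
  have hT : (Yᵀ * Y).PosSemidef := by
    have := Matrix.posSemidef_conjTranspose_mul_self Y
    rwa [Matrix.conjTranspose_eq_transpose_of_trivial] at this
  have hGpd : (Xᵀ * X).PosDef := by
    rw [hG]
    exact Matrix.PosDef.add_posSemidef Matrix.PosDef.one hT
  have hH : (Xᵀ * X).IsHermitian := hGpd.isHermitian
  obtain ⟨μ, hμdef⟩ : ∃ μ : Fin n → ℝ, μ = hH.eigenvalues := ⟨_, rfl⟩
  obtain ⟨V, hVdef⟩ : ∃ V : Matrix (Fin n) (Fin n) ℝ,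
      V = (hH.eigenvectorUnitary : Matrix (Fin n) (Fin n) ℝ) := ⟨_, rfl⟩
  have hV1 : Vᵀ * V = 1 := by
    have h := (Unitary.mem_iff.mp (hH.eigenvectorUnitary).2).1
    rw [Matrix.star_eq_conjTranspose, Matrix.conjTranspose_eq_transpose_of_trivial] at h
    rw [hVdef]; exact h
  have hV2 : V * Vᵀ = 1 := by
    have h := (Unitary.mem_iff.mp (hH.eigenvectorUnitary).2).2
    rw [Matrix.star_eq_conjTranspose, Matrix.conjTranspose_eq_transpose_of_trivial] at h
    rw [hVdef]; exact h
  have spec : Xᵀ * X = V * Matrix.diagonal μ * Vᵀ := by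
    have h := hH.spectral_theorem
    rw [Unitary.conjStarAlgAut_apply, Matrix.star_eq_conjTranspose, Matrix.conjTranspose_eq_transpose_of_trivial] at h
    rw [hVdef, hμdef]
    rw [show (RCLike.ofReal ∘ hH.eigenvalues : Fin n → ℝ) = hH.eigenvalues by
      rw [RCLike.ofReal_real_eq_id]; rfl] at h
    exact h
  -- eigenvalue bounds
  have hμlb : ∀ i, 1 ≤ μ i := by
    intro i
    rw [hμdef]
    have hv := hH.mulVec_eigenvectorBasis i
    have hvn : ⇑(hH.eigenvectorBasis i) ⬝ᵥ ⇑(hH.eigenvectorBasis i) = (1:ℝ) := by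
      have h1 : ‖hH.eigenvectorBasis i‖ = 1 := hH.eigenvectorBasis.orthonormal.1 i
      have h2 := real_inner_self_eq_norm_sq (hH.eigenvectorBasis i)
      rw [h1] at h2
      rw [EuclideanSpace.inner_eq_star_dotProduct, star_trivial] at h2
      simpa using h2
    have hTv : (Yᵀ * Y) *ᵥ ⇑(hH.eigenvectorBasis i) = (hH.eigenvalues i - 1) • ⇑(hH.eigenvectorBasis i) := by
      have e1 : (Xᵀ * X) *ᵥ ⇑(hH.eigenvectorBasis i) = ⇑(hH.eigenvectorBasis i) +
          (Yᵀ * Y) *ᵥ ⇑(hH.eigenvectorBasis i) := by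
        have := congrArg (fun M => M *ᵥ ⇑(hH.eigenvectorBasis i)) hG
        simpa [Matrix.add_mulVec, Matrix.one_mulVec] using this
      have e2 : (Yᵀ * Y) *ᵥ ⇑(hH.eigenvectorBasis i) = hH.eigenvalues i • ⇑(hH.eigenvectorBasis i)
          - ⇑(hH.eigenvectorBasis i) := by
        rw [← hv, e1]; abel
      rw [e2, sub_smul, one_smul]
    have hpos := hT.dotProduct_mulVec_nonneg ⇑(hH.eigenvectorBasis i)
    rw [hTv] at hpos
    simp only [star_trivial, dotProduct_smul, smul_eq_mul] at hpos
    rw [hvn] at hpos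
    linarith [hpos]
  have hμub : ∀ i, μ i ≤ 1 + ‖Y‖ * ‖Y‖ := by
    intro i
    rw [hμdef]
    have hv := hH.mulVec_eigenvectorBasis i
    have hTv : (Yᵀ * Y) *ᵥ ⇑(hH.eigenvectorBasis i) = (hH.eigenvalues i - 1) • ⇑(hH.eigenvectorBasis i) := by
      have e1 : (Xᵀ * X) *ᵥ ⇑(hH.eigenvectorBasis i) = ⇑(hH.eigenvectorBasis i) +
          (Yᵀ * Y) *ᵥ ⇑(hH.eigenvectorBasis i) := by
        have := congrArg (fun M => M *ᵥ ⇑(hH.eigenvectorBasis i)) hG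
        simpa [Matrix.add_mulVec, Matrix.one_mulVec] using this
      have e2 : (Yᵀ * Y) *ᵥ ⇑(hH.eigenvectorBasis i) = hH.eigenvalues i • ⇑(hH.eigenvectorBasis i)
          - ⇑(hH.eigenvectorBasis i) := by
        rw [← hv, e1]; abel
      rw [e2, sub_smul, one_smul]
    have hb := Matrix.l2_opNorm_mulVec (Yᵀ * Y) (hH.eigenvectorBasis i)
    have h1 : ‖hH.eigenvectorBasis i‖ = 1 := hH.eigenvectorBasis.orthonormal.1 i
    rw [h1, mul_one] at hb
    have heq : ‖(EuclideanSpace.equiv (Fin n) ℝ).symm ((Yᵀ * Y) *ᵥ ⇑(hH.eigenvectorBasis i))‖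
        = |hH.eigenvalues i - 1| := by
      rw [hTv]
      have : (EuclideanSpace.equiv (Fin n) ℝ).symm ((hH.eigenvalues i - 1) • ⇑(hH.eigenvectorBasis i))
          = (hH.eigenvalues i - 1) • (hH.eigenvectorBasis i) := rfl
      rw [this, norm_smul, h1, mul_one, Real.norm_eq_abs]
    have hb2 : |hH.eigenvalues i - 1| ≤ ‖Y‖ * ‖Y‖ := by
      rw [← heq, ← hnY]; exact hb
    linarith [(abs_le.mp hb2).2]
  -- construct U
  have hd1 : ∀ i, 1 ≤ Real.sqrt (μ i) := fun i => Real.one_le_sqrt.mpr (hμlb i)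
  have hdsq : ∀ i, Real.sqrt (μ i) * Real.sqrt (μ i) = μ i := fun i =>
    Real.mul_self_sqrt (le_trans zero_le_one (hμlb i))
  have hdne : ∀ i, Real.sqrt (μ i) ≠ 0 := fun i => by
    have := hd1 i; positivity
  set f : Fin n → ℝ := fun i => (Real.sqrt (μ i))⁻¹ with hf
  set Sinv : Matrix (Fin n) (Fin n) ℝ := V * Matrix.diagonal f * Vᵀ with hSinv
  set U : Matrix (Fin n) (Fin n) ℝ := X * Sinv with hU
  -- multiplication of conjugated diagonal matrices
  have hmulD : ∀ a b : Fin n → ℝ, (V * Matrix.diagonal a * Vᵀ) * (V * Matrix.diagonal b * Vᵀ)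
      = V * Matrix.diagonal (fun i => a i * b i) * Vᵀ := by
    intro a b
    calc (V * Matrix.diagonal a * Vᵀ) * (V * Matrix.diagonal b * Vᵀ)
        = V * (Matrix.diagonal a * ((Vᵀ * V) * (Matrix.diagonal b * Vᵀ))) := by
          simp only [Matrix.mul_assoc]
      _ = V * Matrix.diagonal (fun i => a i * b i) * Vᵀ := by
          rw [hV1, Matrix.one_mul, ← Matrix.mul_assoc (Matrix.diagonal a),
            Matrix.diagonal_mul_diagonal, Matrix.mul_assoc]
  have hSinvT : Sinvᵀ = Sinv := by
    rw [hSinv, Matrix.transpose_mul, Matrix.transpose_mul, Matrix.transpose_transpose,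
      Matrix.diagonal_transpose, Matrix.mul_assoc]
  -- U is orthogonal
  have hUtU : Uᵀ * U = 1 := by
    have e1 : Uᵀ * U = Sinv * (Xᵀ * X) * Sinv := by
      rw [hU, Matrix.transpose_mul, hSinvT]
      simp only [Matrix.mul_assoc]
    rw [e1, spec, hSinv, hmulD, hmulD]
    have : (fun i => (fun i => f i * μ i) i * f i) = fun _ => (1:ℝ) := by
      funext i
      simp only [hf]
      rw [← hdsq i]
      field_simp
      rw [Real.sqrt_sq (Real.sqrt_nonneg _)]
      exact div_self (pow_ne_zero 2 (hdne i))
    rw [this, Matrix.diagonal_one, Matrix.mul_one, hV2]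
  -- norm bound for X - U
  have hdiagf : Matrix.diagonal (fun i => 1 - f i) = 1 - Matrix.diagonal f := by
    ext i j
    by_cases h : i = j <;> simp [Matrix.diagonal_apply, Matrix.one_apply, h]
  have hXU : X - U = X * (V * Matrix.diagonal (fun i => 1 - f i) * Vᵀ) := by
    have e0 : V * Matrix.diagonal (fun i => 1 - f i) * Vᵀ = 1 - Sinv := by
      rw [hdiagf, Matrix.mul_sub, Matrix.mul_one, Matrix.sub_mul, hV2, hSinv]
    rw [e0, Matrix.mul_sub, Matrix.mul_one, hU]
  have hfb : ∀ i, |1 - f i| ≤ ‖Y‖ * ‖Y‖ := by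
    intro i
    have h1 : f i ≤ 1 := by
      rw [hf]
      exact inv_le_one_of_one_le₀ (hd1 i)
    have h2 : 0 < f i := by
      rw [hf]
      have := hd1 i
      positivity
    rw [abs_of_nonneg (by linarith)]
    have h3 : Real.sqrt (μ i) * f i = 1 := by
      rw [hf]; exact mul_inv_cancel₀ (hdne i)
    have h4 : μ i - 1 ≤ ‖Y‖ * ‖Y‖ := by linarith [hμub i]
    nlinarith [hd1 i, hdsq i]
  have hnV : ‖V‖ = 1 := by
    apply aux_norm_orth hn
    rw [Matrix.conjTranspose_eq_transpose_of_trivial]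
    exact hV1
  have hnVt : ‖Vᵀ‖ = 1 := by
    apply aux_norm_orth hn
    rw [Matrix.conjTranspose_eq_transpose_of_trivial, Matrix.transpose_transpose]
    exact hV2
  have hnD : ‖Matrix.diagonal (fun i => 1 - f i)‖ ≤ ‖Y‖ * ‖Y‖ :=
    aux_norm_diagonal_le (mul_nonneg (norm_nonneg Y) (norm_nonneg Y)) hfb
  have hnXU : ‖X - U‖ ≤ 2 * (‖Y‖ * ‖Y‖) := by
    rw [hXU]
    calc ‖X * (V * Matrix.diagonal (fun i => 1 - f i) * Vᵀ)‖
        ≤ ‖X‖ * ‖V * Matrix.diagonal (fun i => 1 - f i) * Vᵀ‖ := Matrix.l2_opNorm_mul _ _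
      _ ≤ ‖X‖ * (‖V * Matrix.diagonal (fun i => 1 - f i)‖ * ‖Vᵀ‖) := by
          apply mul_le_mul_of_nonneg_left (Matrix.l2_opNorm_mul _ _) (norm_nonneg X)
      _ ≤ ‖X‖ * ((‖V‖ * ‖Matrix.diagonal (fun i => 1 - f i)‖) * ‖Vᵀ‖) := by
          apply mul_le_mul_of_nonneg_left _ (norm_nonneg X)
          apply mul_le_mul_of_nonneg_right (Matrix.l2_opNorm_mul _ _) (norm_nonneg _)
      _ ≤ 2 * (‖Y‖ * ‖Y‖) := by
          rw [hnV, hnVt, one_mul, mul_one]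
          exact mul_le_mul hXle hnD (norm_nonneg _)
            (by norm_num)
  -- pass to ℂ
  have hmapmul : ∀ A B : Matrix (Fin n) (Fin n) ℝ,
      (A * B).map (Complex.ofReal) = A.map Complex.ofReal * B.map Complex.ofReal := by
    intro A B
    ext i j
    simp [Matrix.mul_apply, Matrix.map_apply]
  have hmapone : (1 : Matrix (Fin n) (Fin n) ℝ).map Complex.ofReal = 1 := by
    ext i j
    by_cases h : i = j <;> simp [Matrix.one_apply, h]
  have hmaptrans : ∀ A : Matrix (Fin n) (Fin n) ℝ,
      (Aᵀ).map Complex.ofReal = (A.map Complex.ofReal)ᵀ := fun A => rfl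
  have hUUt : U * Uᵀ = 1 := mul_eq_one_comm.mp hUtU
  have hUcUt : (U.map Complex.ofReal)ᵀ * (U.map Complex.ofReal) = 1 := by
    rw [← hmaptrans, ← hmapmul, hUtU, hmapone]
  have hUcU2 : (U.map Complex.ofReal) * (U.map Complex.ofReal)ᵀ = 1 := by
    rw [← hmaptrans, ← hmapmul, hUUt, hmapone]
  -- distance bound
  have hsplit : Q - U.map Complex.ofReal
      = (X - U).map Complex.ofReal + Complex.I • (Y.map Complex.ofReal) := by
    ext i j
    simp only [Matrix.sub_apply, Matrix.add_apply, Matrix.smul_apply, Matrix.map_apply, hX, hY,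
      matRe, matIm, smul_eq_mul, Complex.ofReal_sub]
    linear_combination (Complex.re_add_im (Q i j)).symm
  have hQU : ‖Q - U.map Complex.ofReal‖ ≤ 4 * δ := by
    rw [hsplit]
    have b1 : ‖(X - U).map Complex.ofReal‖ ≤ 2 * (‖Y‖ * ‖Y‖) :=
      le_trans (aux_norm_map_ofReal_le _) hnXU
    have b2 : ‖Complex.I • (Y.map Complex.ofReal)‖ ≤ 2 * δ := by
      rw [norm_smul, Complex.norm_I, one_mul]
      exact le_trans (aux_norm_map_ofReal_le _) hYle
    calc ‖(X - U).map Complex.ofReal + Complex.I • (Y.map Complex.ofReal)‖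
        ≤ ‖(X - U).map Complex.ofReal‖ + ‖Complex.I • (Y.map Complex.ofReal)‖ := norm_add_le _ _
      _ ≤ 2 * (‖Y‖ * ‖Y‖) + 2 * δ := add_le_add b1 b2
      _ ≤ 4 * δ := by nlinarith [hYsq]
  -- determinant
  have hdetmap : (U.map Complex.ofReal).det = ((U.det : ℝ) : ℂ) :=
    (RingHom.map_det Complex.ofRealHom U).symm
  have hdetU2 : U.det * U.det = 1 := by
    have h := congrArg Matrix.det hUtU
    rwa [Matrix.det_mul, Matrix.det_transpose, Matrix.det_one] at h
  have hdetU : U.det = 1 := by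
    rcases mul_self_eq_one_iff.mp hdetU2 with h | h
    · exact h
    exfalso
    set M : Matrix (Fin n) (Fin n) ℂ := Q * (U.map Complex.ofReal)ᵀ with hM
    have hQQt : Q * Qᵀ = 1 := mul_eq_one_comm.mp hQ
    have hMMt : M * Mᵀ = 1 := by
      rw [hM, Matrix.transpose_mul, Matrix.transpose_transpose]
      calc Q * (U.map Complex.ofReal)ᵀ * ((U.map Complex.ofReal) * Qᵀ)
          = Q * ((U.map Complex.ofReal)ᵀ * (U.map Complex.ofReal)) * Qᵀ := by
            simp only [Matrix.mul_assoc]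
        _ = 1 := by rw [hUcUt, Matrix.mul_one, hQQt]
    have hdetM : M.det = -1 := by
      rw [hM, Matrix.det_mul, hdet, one_mul, Matrix.det_transpose, hdetmap, h]
      norm_num
    have hdet1M : ((1 : Matrix (Fin n) (Fin n) ℂ) + M).det = 0 := by
      have h1 : (1 : Matrix (Fin n) (Fin n) ℂ) + M = M * (Mᵀ + 1) := by
        rw [Matrix.mul_add, hMMt, Matrix.mul_one, add_comm]
      have h2 : (Mᵀ + (1 : Matrix (Fin n) (Fin n) ℂ)).det = (1 + M).det := by
        rw [show Mᵀ + (1 : Matrix (Fin n) (Fin n) ℂ) = (1 + M)ᵀ by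
          rw [Matrix.transpose_add, Matrix.transpose_one, add_comm], Matrix.det_transpose]
      have h3 : ((1 : Matrix (Fin n) (Fin n) ℂ) + M).det = M.det * (Mᵀ + 1).det := by
        rw [h1, Matrix.det_mul]
      rw [hdetM, h2] at h3
      have h4 : (2 : ℂ) * ((1 : Matrix (Fin n) (Fin n) ℂ) + M).det = 0 := by
        linear_combination h3
      have := mul_eq_zero.mp h4
      simpa using this
    -- but 1 + M is invertible
    have hUct : ‖(U.map Complex.ofReal)ᵀ‖ = 1 := by
      apply aux_norm_orth hn
      have e1 : ((U.map Complex.ofReal)ᵀ)ᴴ = U.map Complex.ofReal := by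
        ext i j
        simp [Matrix.conjTranspose_apply, Complex.conj_ofReal]
      rw [e1]
      exact hUcU2
    have hM1 : ‖(1 : Matrix (Fin n) (Fin n) ℂ) - M‖ ≤ 1 := by
      have e1 : (1 : Matrix (Fin n) (Fin n) ℂ) - M
          = (U.map Complex.ofReal - Q) * (U.map Complex.ofReal)ᵀ := by
        rw [Matrix.sub_mul, hUcU2, hM]
      rw [e1]
      calc ‖(U.map Complex.ofReal - Q) * (U.map Complex.ofReal)ᵀ‖
          ≤ ‖U.map Complex.ofReal - Q‖ * ‖(U.map Complex.ofReal)ᵀ‖ := Matrix.l2_opNorm_mul _ _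
        _ = ‖Q - U.map Complex.ofReal‖ := by rw [hUct, mul_one, norm_sub_rev]
        _ ≤ 1 := by linarith [hQU]
    have ht : ‖(2⁻¹ : ℂ) • ((1 : Matrix (Fin n) (Fin n) ℂ) - M)‖ < 1 := by
      rw [norm_smul]
      have : ‖(2⁻¹ : ℂ)‖ = 2⁻¹ := by
        rw [norm_inv]
        norm_num
      rw [this]
      nlinarith [norm_nonneg ((1 : Matrix (Fin n) (Fin n) ℂ) - M)]
    have hu : IsUnit ((1 : Matrix (Fin n) (Fin n) ℂ)
        - (2⁻¹ : ℂ) • ((1 : Matrix (Fin n) (Fin n) ℂ) - M)) :=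
      isUnit_one_sub_of_norm_lt_one ht
    have heq2 : (1 : Matrix (Fin n) (Fin n) ℂ) + M
        = (2 : ℂ) • ((1 : Matrix (Fin n) (Fin n) ℂ) - (2⁻¹ : ℂ) • (1 - M)) := by
      rw [smul_sub, smul_smul, show (2:ℂ) * 2⁻¹ = 1 by norm_num, one_smul, two_smul]
      abel
    have hunit : IsUnit ((1 : Matrix (Fin n) (Fin n) ℂ) + M) := by
      rw [heq2]
      have h2u : IsUnit ((2 : ℂ) • (1 : Matrix (Fin n) (Fin n) ℂ)) := by
        rw [Matrix.isUnit_iff_isUnit_det, Matrix.det_smul, Matrix.det_one, mul_one]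
        exact (isUnit_iff_ne_zero.mpr (two_ne_zero (α := ℂ))).pow (Fintype.card (Fin n))
      have e3 : (2 : ℂ) • ((1 : Matrix (Fin n) (Fin n) ℂ) - (2⁻¹ : ℂ) • (1 - M))
          = ((2 : ℂ) • (1 : Matrix (Fin n) (Fin n) ℂ))
            * ((1 : Matrix (Fin n) (Fin n) ℂ) - (2⁻¹ : ℂ) • (1 - M)) := by
        rw [Matrix.smul_mul, Matrix.one_mul]
      rw [e3]
      exact h2u.mul hu
    have h0 : IsUnit ((1 : Matrix (Fin n) (Fin n) ℂ) + M).det :=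
      (Matrix.isUnit_iff_isUnit_det _).mp hunit
    rw [hdet1M] at h0
    exact h0.ne_zero rfl
  refine ⟨U, hUtU, hdetU, ?_⟩
  exact hQU
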